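/- An abelian group D is divisible if and only if for every abelian group G containing D as a subgroup, D is a direct factor of G, i.e., there exists a subgroup H of G with G = D ⊕ H (internal direct sum). -/
import Mathlib


/-- An abelian group `D` is divisible iff `D` is a direct factor of every abelian group
containing it (as the range of an injective homomorphism). -/
theorem divisible_iff_direct_factor {D : Type} [AddCommGroup D] :
    (∀ d : D, ∀ n : ℕ, 0 < n → ∃ x : D, n • x = d) ↔
      (∀ (G : Type) (_ : AddCommGroup G) (f : D →+ G), Function.Injective f →
        ∃ H : AddSubgroup G, f.range ⊓ H = ⊥ ∧ f.range ⊔ H = ⊤) := by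
  constructor
  · intro hdiv G _ f hf
    -- D is divisible by ℕ, hence by ℤ
    have : DivisibleBy D ℕ :=
      ⟨fun d n => if h : 0 < n then (hdiv d n h).choose else 0,
        by intro d; simp, by
          intro n d hn
          have h : 0 < n := Nat.pos_of_ne_zero hn
          simp only [dif_pos h]
          exact (hdiv d n h).choose_spec⟩
    have : DivisibleBy D ℤ := AddGroup.divisibleByIntOfDivisibleByNat D
    have hBaer : Module.Baer ℤ D := Module.Baer.of_divisible D
    have hInj : Module.Injective ℤ D := hBaer.injective
    obtain ⟨r, hr⟩ := hInj.out f.toIntLinearMap hf LinearMap.id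
    refine ⟨(r.toAddMonoidHom).ker, ?_, ?_⟩
    · rw [eq_bot_iff]
      rintro g ⟨⟨x, rfl⟩, hker⟩
      have : r (f x) = x := hr x
      have hx : x = 0 := by
        rw [← this]; exact hker
      simp [hx]
    · rw [eq_top_iff]
      intro g _
      rw [AddSubgroup.mem_sup]
      refine ⟨f (r g), ⟨r g, rfl⟩, g - f (r g), ?_, by abel⟩
      have : r (f (r g)) = r g := hr (r g)
      simp only [AddMonoidHom.mem_ker, LinearMap.toAddMonoidHom_coe, map_sub]
      rw [show r (f (r g)) = r g from this]
      abel
  · intro h d n hn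
    -- G = (D × ℤ) / ⟨(d, n)⟩
    set N : AddSubgroup (D × ℤ) := AddSubgroup.zmultiples (d, (n : ℤ)) with hN
    set G := (D × ℤ) ⧸ N with hG
    set f : D →+ G := (QuotientAddGroup.mk' N).comp (AddMonoidHom.inl D ℤ) with hf
    have hfinj : Function.Injective f := by
      rw [injective_iff_map_eq_zero]
      intro x hx
      have : (x, (0 : ℤ)) ∈ N := (QuotientAddGroup.eq_zero_iff _).mp hx
      obtain ⟨k, hk⟩ := this
      have h2 : k • (n : ℤ) = 0 := congrArg Prod.snd hk
      have hk0 : k = 0 := by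
        rcases (by simpa using h2 : k = 0 ∨ (n : ℤ) = 0) with h | h
        · exact h
        · exact absurd h (by exact_mod_cast hn.ne')
      have := congrArg Prod.fst hk
      simp [hk0] at this
      exact this.symm
    obtain ⟨H, hinf, hsup⟩ := h G _ f hfinj
    -- decompose [(0,1)]
    have hmem : ((QuotientAddGroup.mk' N) (0, 1) : G) ∈ f.range ⊔ H := hsup ▸ trivial
    rw [AddSubgroup.mem_sup] at hmem
    obtain ⟨y, ⟨a, rfl⟩, z, hz, hyz⟩ := hmem
    -- n • [(0,1)] = [(0,n)] = [(-d,0)]  since (d,n) ∈ N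
    have key : (n : ℤ) • ((QuotientAddGroup.mk' N) (0, 1) : G) = f (-d) := by
      rw [← map_zsmul]
      show QuotientAddGroup.mk' N _ = QuotientAddGroup.mk' N _
      rw [QuotientAddGroup.mk'_eq_mk']
      exact ⟨(-d, -(n : ℤ)), ⟨-1, by simp [Prod.ext_iff]⟩, by simp [Prod.ext_iff]⟩
    have hsplit : f (-d - (n : ℤ) • a) = (n : ℤ) • z := by
      have : (n : ℤ) • ((QuotientAddGroup.mk' N) (0, 1) : G) = (n : ℤ) • f a + (n : ℤ) • z := by
        rw [← hyz]; exact zsmul_add (f a) z _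
      rw [key] at this
      rw [map_sub, map_zsmul]
      rw [this]
      abel
    have hz' : (n : ℤ) • z ∈ H := AddSubgroup.zsmul_mem H hz n
    have hmem0 : f (-d - (n : ℤ) • a) ∈ f.range ⊓ H := ⟨⟨_, rfl⟩, hsplit ▸ hz'⟩
    rw [hinf, AddSubgroup.mem_bot] at hmem0
    have : -d - (n : ℤ) • a = 0 := hfinj (by simpa using hmem0)
    have hd : (n : ℤ) • (-a) = d := by
      have h1 := sub_eq_zero.mp this
      rw [smul_neg, ← h1, neg_neg]
    exact ⟨-a, by rw [← hd, natCast_zsmul]⟩
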